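/- Let a₁, a₂ be complex constants and let V ⊆ ℂ be an open set not containing 0. Suppose q, p : ℂ → ℂ are differentiable on V, satisfy the KNY system q'(s) = (2 p q² − q² + (a₁+a₂) q + s)/s and p'(s) = −(2 p(p−1) q + (a₁+a₂) p − a₂)/s on V, and q(s) ≠ 0 on V. Let U ⊆ ℂ be an open set of points t ≠ 0 with t² ∈ V, and define on U: x(t) = q(t²)/t and y(t) = t(8 p(t²) q(t²)² − 4 q(t²)² − 2(1 − 2a₁ − 2a₂) q(t²) + 4 t²)/(2 q(t²)²). Then x, y satisfy the Filipuk–Żołądek system x'(t) = x² y/t, y'(t) = α − x y²/t + β/x² + 4 t x − 4 t/x³ on U, with α = −4(a₁ − a₂), β = 4(1 − a₁ − a₂). -/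

import Mathlib

set_option maxHeartbeats 1000000 in
/-- Under `x(t) = q(t²)/t`,
`y(t) = t(8pq² − 4q² − 2(1−2a₁−2a₂)q + 4t²)/(2q²)` (evaluated at `s = t²`),
solutions of the KNY system are mapped to solutions of the Filipuk–Żołądek
system with `α = −4(a₁ − a₂)`, `β = 4(1 − a₁ − a₂)`, `γ = 4`, `δ = −4`. -/
theorem KNY_to_FZ (a₁ a₂ : ℂ) (V : Set ℂ)
    (hV : IsOpen V) (hV0 : (0 : ℂ) ∉ V) (q p : ℂ → ℂ)
    (hq : ∀ s ∈ V, HasDerivAt q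
      ((2 * p s * (q s) ^ 2 - (q s) ^ 2 + (a₁ + a₂) * q s + s) / s) s)
    (hp : ∀ s ∈ V, HasDerivAt p
      (-((2 * p s * (p s - 1) * q s + (a₁ + a₂) * p s - a₂) / s)) s)
    (hqne : ∀ s ∈ V, q s ≠ 0)
    (U : Set ℂ) (hU : IsOpen U) (hUV : ∀ t ∈ U, t ≠ 0 ∧ t ^ 2 ∈ V)
    (x y : ℂ → ℂ)
    (hx : ∀ t ∈ U, x t = q (t ^ 2) / t)
    (hy : ∀ t ∈ U, y t =
      t * (8 * p (t ^ 2) * (q (t ^ 2)) ^ 2 - 4 * (q (t ^ 2)) ^ 2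
        - 2 * (1 - 2 * a₁ - 2 * a₂) * q (t ^ 2) + 4 * t ^ 2) / (2 * (q (t ^ 2)) ^ 2)) :
    ∀ t ∈ U,
      HasDerivAt x ((x t) ^ 2 * y t / t) t ∧
      HasDerivAt y ((-4 * (a₁ - a₂)) - x t * (y t) ^ 2 / t
        + (4 * (1 - a₁ - a₂)) / (x t) ^ 2 + 4 * t * x t - 4 * t / (x t) ^ 3) t := by
  intro t ht
  obtain ⟨ht0, hsV⟩ := hUV t ht
  have hq0 : q (t ^ 2) ≠ 0 := hqne _ hsV
  have hs0 : (t : ℂ) ^ 2 ≠ 0 := pow_ne_zero 2 ht0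
  have hsq : HasDerivAt (fun u : ℂ => u ^ 2) (2 * t) t := by
    simpa using hasDerivAt_pow 2 t
  have hQ : HasDerivAt (fun u => q (u ^ 2))
      (((2 * p (t ^ 2) * (q (t ^ 2)) ^ 2 - (q (t ^ 2)) ^ 2 + (a₁ + a₂) * q (t ^ 2)
        + t ^ 2) / t ^ 2) * (2 * t)) t := (hq _ hsV).comp t hsq
  have hP : HasDerivAt (fun u => p (u ^ 2))
      ((-((2 * p (t ^ 2) * (p (t ^ 2) - 1) * q (t ^ 2) + (a₁ + a₂) * p (t ^ 2) - a₂)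
        / t ^ 2)) * (2 * t)) t := (hp _ hsV).comp t hsq
  set Dq := ((2 * p (t ^ 2) * (q (t ^ 2)) ^ 2 - (q (t ^ 2)) ^ 2 + (a₁ + a₂) * q (t ^ 2)
        + t ^ 2) / t ^ 2) * (2 * t) with hDq
  set Dp := (-((2 * p (t ^ 2) * (p (t ^ 2) - 1) * q (t ^ 2) + (a₁ + a₂) * p (t ^ 2) - a₂)
        / t ^ 2)) * (2 * t) with hDp
  -- x part
  have hxF : x =ᶠ[nhds t] fun u => q (u ^ 2) / u := by
    filter_upwards [hU.mem_nhds ht] with u hu using hx u hu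
  have hF : HasDerivAt (fun u => q (u ^ 2) / u)
      ((Dq * t - q (t ^ 2) * 1) / t ^ 2) t := hQ.div (hasDerivAt_id t) ht0
  have hxder : HasDerivAt x ((Dq * t - q (t ^ 2) * 1) / t ^ 2) t :=
    hF.congr_of_eventuallyEq hxF
  -- y part
  have hQ2 : HasDerivAt (fun u => (q (u ^ 2)) ^ 2) ((2 : ℂ) * (q (t ^ 2)) ^ 1 * Dq) t := by
    simpa using hQ.fun_pow 2
  have hA : HasDerivAt (fun u => 8 * p (u ^ 2) * (q (u ^ 2)) ^ 2 - 4 * (q (u ^ 2)) ^ 2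
      - 2 * (1 - 2 * a₁ - 2 * a₂) * q (u ^ 2) + 4 * u ^ 2)
      ((8 * Dp * (q (t ^ 2)) ^ 2 + 8 * p (t ^ 2) * ((2 : ℂ) * (q (t ^ 2)) ^ 1 * Dq))
        - 4 * ((2 : ℂ) * (q (t ^ 2)) ^ 1 * Dq) - 2 * (1 - 2 * a₁ - 2 * a₂) * Dq
        + 4 * (2 * t)) t := by
    have h1 : HasDerivAt (fun u => 8 * p (u ^ 2) * (q (u ^ 2)) ^ 2)
        (8 * Dp * (q (t ^ 2)) ^ 2 + 8 * p (t ^ 2) * ((2 : ℂ) * (q (t ^ 2)) ^ 1 * Dq)) t := by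
      have := ((hP.const_mul (8 : ℂ)).fun_mul hQ2)
      simpa [mul_assoc, mul_comm, mul_left_comm] using this
    exact ((h1.sub (hQ2.const_mul 4)).sub (hQ.const_mul (2 * (1 - 2 * a₁ - 2 * a₂)))).add
      (hsq.const_mul 4)
  set A' := (8 * Dp * (q (t ^ 2)) ^ 2 + 8 * p (t ^ 2) * ((2 : ℂ) * (q (t ^ 2)) ^ 1 * Dq))
        - 4 * ((2 : ℂ) * (q (t ^ 2)) ^ 1 * Dq) - 2 * (1 - 2 * a₁ - 2 * a₂) * Dq
        + 4 * (2 * t) with hA'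
  have hN : HasDerivAt (fun u => u * (8 * p (u ^ 2) * (q (u ^ 2)) ^ 2 - 4 * (q (u ^ 2)) ^ 2
      - 2 * (1 - 2 * a₁ - 2 * a₂) * q (u ^ 2) + 4 * u ^ 2))
      (1 * (8 * p (t ^ 2) * (q (t ^ 2)) ^ 2 - 4 * (q (t ^ 2)) ^ 2
      - 2 * (1 - 2 * a₁ - 2 * a₂) * q (t ^ 2) + 4 * t ^ 2) + t * A') t :=
    (hasDerivAt_id t).fun_mul hA
  have hD : HasDerivAt (fun u => 2 * (q (u ^ 2)) ^ 2) (2 * ((2 : ℂ) * (q (t ^ 2)) ^ 1 * Dq)) t :=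
    hQ2.const_mul 2
  have hDne : 2 * (q (t ^ 2)) ^ 2 ≠ 0 := by
    simp [hq0]
  have hG : HasDerivAt (fun u => u * (8 * p (u ^ 2) * (q (u ^ 2)) ^ 2 - 4 * (q (u ^ 2)) ^ 2
      - 2 * (1 - 2 * a₁ - 2 * a₂) * q (u ^ 2) + 4 * u ^ 2) / (2 * (q (u ^ 2)) ^ 2))
      (((1 * (8 * p (t ^ 2) * (q (t ^ 2)) ^ 2 - 4 * (q (t ^ 2)) ^ 2
      - 2 * (1 - 2 * a₁ - 2 * a₂) * q (t ^ 2) + 4 * t ^ 2) + t * A') * (2 * (q (t ^ 2)) ^ 2)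
      - t * (8 * p (t ^ 2) * (q (t ^ 2)) ^ 2 - 4 * (q (t ^ 2)) ^ 2
      - 2 * (1 - 2 * a₁ - 2 * a₂) * q (t ^ 2) + 4 * t ^ 2)
        * (2 * ((2 : ℂ) * (q (t ^ 2)) ^ 1 * Dq))) / (2 * (q (t ^ 2)) ^ 2) ^ 2) t :=
    hN.fun_div hD hDne
  have hyF : y =ᶠ[nhds t] fun u => u * (8 * p (u ^ 2) * (q (u ^ 2)) ^ 2 - 4 * (q (u ^ 2)) ^ 2
      - 2 * (1 - 2 * a₁ - 2 * a₂) * q (u ^ 2) + 4 * u ^ 2) / (2 * (q (u ^ 2)) ^ 2) := by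
    filter_upwards [hU.mem_nhds ht] with u hu using hy u hu
  have hyder := hG.congr_of_eventuallyEq hyF
  have hDq2 : Dq = (2 * (2 * p (t ^ 2) * (q (t ^ 2)) ^ 2 - (q (t ^ 2)) ^ 2
      + (a₁ + a₂) * q (t ^ 2) + t ^ 2)) / t := by
    rw [hDq]; field_simp
  have hDp2 : Dp = (-(2 * (2 * p (t ^ 2) * (p (t ^ 2) - 1) * q (t ^ 2)
      + (a₁ + a₂) * p (t ^ 2) - a₂))) / t := by
    rw [hDp]; field_simp
  -- clean numerator for the y-derivative
  have hnum : (1 * (8 * p (t ^ 2) * (q (t ^ 2)) ^ 2 - 4 * (q (t ^ 2)) ^ 2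
      - 2 * (1 - 2 * a₁ - 2 * a₂) * q (t ^ 2) + 4 * t ^ 2) + t * A') * (2 * (q (t ^ 2)) ^ 2)
      - t * (8 * p (t ^ 2) * (q (t ^ 2)) ^ 2 - 4 * (q (t ^ 2)) ^ 2
      - 2 * (1 - 2 * a₁ - 2 * a₂) * q (t ^ 2) + 4 * t ^ 2)
        * (2 * ((2 : ℂ) * (q (t ^ 2)) ^ 1 * Dq))
      = ((8 * p (t ^ 2) * (q (t ^ 2)) ^ 2 - 4 * (q (t ^ 2)) ^ 2
        - 2 * (1 - 2 * a₁ - 2 * a₂) * q (t ^ 2) + 4 * t ^ 2)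
        + (8 * (-(2 * (2 * p (t ^ 2) * (p (t ^ 2) - 1) * q (t ^ 2)
          + (a₁ + a₂) * p (t ^ 2) - a₂))) * (q (t ^ 2)) ^ 2
          + 16 * p (t ^ 2) * q (t ^ 2) * (2 * (2 * p (t ^ 2) * (q (t ^ 2)) ^ 2
            - (q (t ^ 2)) ^ 2 + (a₁ + a₂) * q (t ^ 2) + t ^ 2))
          - 8 * q (t ^ 2) * (2 * (2 * p (t ^ 2) * (q (t ^ 2)) ^ 2
            - (q (t ^ 2)) ^ 2 + (a₁ + a₂) * q (t ^ 2) + t ^ 2))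
          - 2 * (1 - 2 * a₁ - 2 * a₂) * (2 * (2 * p (t ^ 2) * (q (t ^ 2)) ^ 2
            - (q (t ^ 2)) ^ 2 + (a₁ + a₂) * q (t ^ 2) + t ^ 2))
          + 8 * t ^ 2)) * (2 * (q (t ^ 2)) ^ 2)
        - 4 * (8 * p (t ^ 2) * (q (t ^ 2)) ^ 2 - 4 * (q (t ^ 2)) ^ 2
          - 2 * (1 - 2 * a₁ - 2 * a₂) * q (t ^ 2) + 4 * t ^ 2) * q (t ^ 2)
          * (2 * (2 * p (t ^ 2) * (q (t ^ 2)) ^ 2 - (q (t ^ 2)) ^ 2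
            + (a₁ + a₂) * q (t ^ 2) + t ^ 2)) := by
    rw [hA', hDq2, hDp2]
    rw [mul_comm t, sub_eq_iff_eq_add, ← sub_eq_iff_eq_add']
    field_simp
    ring
  rw [hnum] at hyder
  replace hyder : HasDerivAt y _ t := hyder
  constructor
  · convert hxder using 1
    rw [hx t ht, hy t ht, hDq]
    field_simp
    ring
  · convert hyder using 1
    rw [hx t ht, hy t ht]
    have hterm : ∀ NA : ℂ, q (t ^ 2) / t * (t * NA / (2 * (q (t ^ 2)) ^ 2)) ^ 2 / t
        = NA ^ 2 / (4 * (q (t ^ 2)) ^ 3) := by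
      intro NA
      rw [div_eq_div_iff (by simp [ht0, hq0]) (by simp [hq0])]
      field_simp
      ring
    have h4 : 4 * t * (q (t ^ 2) / t) = 16 * (q (t ^ 2)) ^ 4 / (4 * (q (t ^ 2)) ^ 3) := by
      field_simp; ring
    rw [hterm, h4, div_pow (q (t ^ 2)) t 2, div_div_eq_mul_div, div_pow (q (t ^ 2)) t 3,
      div_div_eq_mul_div]
    have e1 : -4 * (a₁ - a₂) = -16 * (a₁ - a₂) * (q (t ^ 2)) ^ 3 / (4 * (q (t ^ 2)) ^ 3) := by
      rw [eq_div_iff (by simp [hq0])]; ring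
    have e3 : 4 * (1 - a₁ - a₂) * t ^ 2 / (q (t ^ 2)) ^ 2
        = 16 * (1 - a₁ - a₂) * t ^ 2 * q (t ^ 2) / (4 * (q (t ^ 2)) ^ 3) := by
      rw [div_eq_div_iff (by simp [hq0]) (by simp [hq0])]; ring
    have e5 : 4 * t * t ^ 3 / (q (t ^ 2)) ^ 3
        = 16 * t * t ^ 3 / (4 * (q (t ^ 2)) ^ 3) := by
      rw [div_eq_div_iff (by simp [hq0]) (by simp [hq0])]; ring
    rw [e1, e3, e5]
    simp only [← add_div, ← sub_div]
    rw [div_eq_div_iff (by simp [hq0]) (pow_ne_zero 2 hDne)]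
    ring
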